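/- For all integers a, b and every natural number n ≥ 2, the identity n·T^{a,b}_n = b(2n−1)·T^{a,b}_{n−1} − (b² − 4a²)(n−1)·T^{a,b}_{n−2} holds in ℤ. (In particular, for a = b = 1: n·T_n = (2n−1)·T_{n−1} + (3n−3)·T_{n−2}.) -/
import Mathlib


open Polynomial

/-- The generalized central trinomial coefficient `T^{a,b}_n`:
the coefficient of `X^n` in `(a + bX + aX^2)^n`. -/
noncomputable def genTrinomial (a b : ℤ) (n : ℕ) : ℤ :=
  ((C a + C b * X + C a * X ^ 2) ^ n).coeff n

/-- The generalized Motzkin number `M^{a,b}_n`: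
the coefficient of `X^n` in `(a + bX + aX^2)^n * (1 - X^2)`. -/
noncomputable def genMotzkin (a b : ℤ) (n : ℕ) : ℤ :=
  (((C a + C b * X + C a * X ^ 2) ^ n) * (1 - X ^ 2)).coeff n

variable {a b : ℤ}

private noncomputable def P (a b : ℤ) : ℤ[X] := C a + C b * X + C a * X ^ 2

private lemma natDegree_P : (P a b).natDegree ≤ 2 := by
  unfold P; compute_degree

private lemma reflect_P : reflect 2 (P a b) = P a b := by
  have : P a b = C a * X ^ 0 + C b * X ^ 1 + C a * X ^ 2 := by unfold P; ring
  rw [this, reflect_add, reflect_add, reflect_C_mul_X_pow, reflect_C_mul_X_pow,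
    reflect_C_mul_X_pow]
  norm_num [revAt_le]
  ring

private lemma reflect_P_pow (t : ℕ) : reflect (2 * t) ((P a b) ^ t) = (P a b) ^ t := by
  induction t with
  | zero => simp
  | succ t ih =>
    have h1 : ((P a b) ^ t).natDegree ≤ 2 * t :=
      le_trans (natDegree_pow_le) (by nlinarith [natDegree_P (a := a) (b := b)])
    have : (2 * (t + 1)) = 2 * t + 2 := by ring
    rw [this, pow_succ, reflect_mul _ _ h1 natDegree_P, ih, reflect_P]

private lemma palPair (t s s' N : ℕ) (h : s + s' + 2 * t = 2 * N) :
    (X ^ s * (P a b) ^ t).coeff N = (X ^ s' * (P a b) ^ t).coeff N := by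
  have hdX : (X ^ s : ℤ[X]).natDegree ≤ s + s' := by
    simpa using (natDegree_X_pow_le (R := ℤ) s).trans (Nat.le_add_right s s')
  have hdP : ((P a b) ^ t).natDegree ≤ 2 * t :=
    natDegree_pow_le.trans (by nlinarith [natDegree_P (a := a) (b := b)])
  have hrefl : reflect (s + s' + 2 * t) (X ^ s * (P a b) ^ t) = X ^ s' * (P a b) ^ t := by
    rw [reflect_mul _ _ hdX hdP, reflect_P_pow, reflect_monomial, revAt_le (Nat.le_add_right s s'),
      (by omega : s + s' - s = s')]
  have := coeff_reflect (s + s' + 2 * t) (X ^ s * (P a b) ^ t) N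
  rw [hrefl, h, revAt_le (by omega : N ≤ 2 * N)] at this
  rw [this]
  congr 1
  omega

private lemma Xmul_deriv_Xpow (s : ℕ) :
    (X : ℤ[X]) * derivative ((X : ℤ[X]) ^ s) = C (s : ℤ) * X ^ s := by
  cases s with
  | zero => simp
  | succ m =>
    rw [derivative_X_pow]
    simp only [Nat.add_sub_cancel]
    rw [pow_succ]
    ring

private lemma deriv_P : derivative (P a b) = C b + C (2 * a) * X := by
  unfold P
  simp only [derivative_add, derivative_C, derivative_C_mul, derivative_X, derivative_X_pow, C_mul]
  simp
  ring

private lemma derivId (s t : ℕ) :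
    X * derivative (X ^ s * (P a b) ^ (t + 1)) =
      C ((s : ℤ) + t + 1) * (X ^ s * (P a b) ^ (t + 1)) +
        C ((t : ℤ) + 1) * (C a * ((X ^ (s + 2) - X ^ s) * (P a b) ^ t)) := by
  rw [derivative_mul, derivative_pow_succ]
  have expand : X * (derivative (X ^ s) * P a b ^ (t+1) + X ^ s * (C ((t:ℤ) + 1) * P a b ^ t * derivative (P a b)))
      = (X * derivative (X ^ s)) * P a b ^ (t+1)
        + C ((t:ℤ)+1) * (X ^ s * (X * derivative (P a b)) * P a b ^ t) := by ring
  push_cast at expand ⊢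
  rw [expand, Xmul_deriv_Xpow, deriv_P]
  have hXP : (X : ℤ[X]) * (C b + C (2*a) * X) = P a b + C a * (X ^ 2 - 1) := by
    unfold P
    rw [C_mul, show ((C (2:ℤ)) = 2) from map_ofNat C 2]
    ring
  rw [hXP]
  have : (P a b) ^ (t+1) = P a b * (P a b) ^ t := by ring
  rw [this]
  have h2 : (X:ℤ[X]) ^ (s+2) = X ^ s * X ^ 2 := by ring
  rw [h2]
  simp only [C_add, C_mul, C_1]
  ring

private lemma Dcoeff (s t N : ℕ) :
    ((N : ℤ) + 1) * (X ^ s * (P a b) ^ (t + 1)).coeff (N + 1)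
      = ((s : ℤ) + t + 1) * (X ^ s * (P a b) ^ (t + 1)).coeff (N + 1)
        + ((t : ℤ) + 1) * a *
          ((X ^ (s + 2) * (P a b) ^ t).coeff (N + 1) - (X ^ s * (P a b) ^ t).coeff (N + 1)) := by
  have h := congrArg (fun f => coeff f (N + 1)) (derivId (a := a) (b := b) s t)
  simp only [coeff_X_mul, coeff_derivative, coeff_add, coeff_C_mul, sub_mul, coeff_sub] at h
  push_cast at h
  linarith [h]

theorem stmt2 (a b : ℤ) (n : ℕ) (hn : 2 ≤ n) :
    (n : ℤ) * genTrinomial a b n =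
      b * (2 * (n : ℤ) - 1) * genTrinomial a b (n - 1)
        - (b ^ 2 - 4 * a ^ 2) * ((n : ℤ) - 1) * genTrinomial a b (n - 2) := by
  obtain ⟨k, rfl⟩ : ∃ k, n = k + 2 := ⟨n - 2, by omega⟩
  have hP : (C a + C b * X + C a * X ^ 2) = P a b := rfl
  simp only [genTrinomial, hP, show k + 2 - 1 = k + 1 from rfl, show k + 2 - 2 = k from rfl]
  have s2 : ((P a b) ^ (k+2)).coeff (k+2) = (X ^ 2 * (P a b) ^ (k+2)).coeff (k+4) :=
    (coeff_X_pow_mul _ 2 (k+2)).symm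
  have s1 : ((P a b) ^ (k+1)).coeff (k+1) = (X ^ 3 * (P a b) ^ (k+1)).coeff (k+4) :=
    (coeff_X_pow_mul _ 3 (k+1)).symm
  have s0 : ((P a b) ^ k).coeff k = (X ^ 4 * (P a b) ^ k).coeff (k+4) :=
    (coeff_X_pow_mul _ 4 k).symm
  rw [s2, s1, s0]
  have pE1 : X ^ 2 * (P a b) ^ (k+2)
      = C (a^2) * (X ^ 2 * (P a b) ^ k) + C (2*a*b) * (X ^ 3 * (P a b) ^ k)
        + C (2*a^2+b^2) * (X ^ 4 * (P a b) ^ k) + C (2*a*b) * (X ^ 5 * (P a b) ^ k)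
        + C (a^2) * (X ^ 6 * (P a b) ^ k) := by
    simp only [C_add, C_mul, map_pow, map_ofNat]
    unfold P
    ring
  have pE2 : X ^ 3 * (P a b) ^ (k+1)
      = C a * (X ^ 3 * (P a b) ^ k) + C b * (X ^ 4 * (P a b) ^ k)
        + C a * (X ^ 5 * (P a b) ^ k) := by
    unfold P; ring
  have hE1 := congrArg (fun f => coeff f (k+4)) pE1
  have hE2 := congrArg (fun f => coeff f (k+4)) pE2
  simp only [coeff_add, coeff_C_mul] at hE1 hE2
  have h26 := palPair (a := a) (b := b) k 2 6 (k+4) (by omega)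
  have h35 := palPair (a := a) (b := b) k 3 5 (k+4) (by omega)
  rcases k with _ | l
  · -- k = 0
    simp only [pow_zero, mul_one, coeff_X_pow] at hE1 hE2 h26 h35 ⊢
    norm_num at hE1 hE2 h26 h35 ⊢
    linear_combination 2*hE1 - 3*b*hE2 + 2*a^2*h26 + a*b*h35
  · -- k = l+1
    have pc4 : X ^ 4 * (P a b) ^ (l+1)
        = C a * (X ^ 4 * (P a b) ^ l) + C b * (X ^ 5 * (P a b) ^ l)
          + C a * (X ^ 6 * (P a b) ^ l) := by unfold P; ring
    have pc6 : X ^ 6 * (P a b) ^ (l+1)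
        = C a * (X ^ 6 * (P a b) ^ l) + C b * (X ^ 7 * (P a b) ^ l)
          + C a * (X ^ 8 * (P a b) ^ l) := by unfold P; ring
    have fc4 := congrArg (fun f => coeff f (l+1+4)) pc4
    have fc6 := congrArg (fun f => coeff f (l+1+4)) pc6
    simp only [coeff_add, coeff_C_mul] at fc4 fc6
    have g5 := Dcoeff (a := a) (b := b) 5 l (l+4)
    have g6 := Dcoeff (a := a) (b := b) 6 l (l+4)
    have d46 := palPair (a := a) (b := b) l 4 6 (l+1+4) (by omega)
    have hidx : l + 4 + 1 = l + 1 + 4 := by omega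
    rw [hidx] at g5 g6
    push_cast at g5 g6 hE1 hE2 ⊢
    linear_combination ((l:ℤ)+1+2)*hE1 - b*(2*((l:ℤ)+1)+3)*hE2 + a^2*((l:ℤ)+1+2)*h26
      + a*b*h35 - 2*a^2*((l:ℤ)+1)*fc4 + 2*a^2*((l:ℤ)+1)*fc6 - 2*a*b*g5 - 2*a^2*g6
      - 2*a^3*((l:ℤ)+1)*d46
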